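/- In the random fs-relation graph model with n1 = δn and n2 = (1-δ)n for a constant δ ∈ (0,1) (δn an integer) and with m - n ≥ m/c for a constant c > 1, one has Σ_{v ∈ T} Σ_{w ∈ T_1(v)} E[Z_v·Z_w] ≤ ( 4c⁴δ(1-δ)²·n³/m⁶ + 4c³δ(1-δ)·n²/m⁵ + 4c³δ·n/m⁵ )·|T|. -/

import Mathlib

open scoped Classical
open Finset

noncomputable section

/-- The sample space of the random fs-relation graph model with `n1` applicants of the
first category, `n2` applicants of the second category, and `m` items: an outcome
records the `f1`-, `s1`-, `f2`- and `s2`-items assigned to the applicants. -/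
abbrev FSSpace (n1 n2 m : ℕ) : Type :=
  (Fin n1 → Fin m) × (Fin n1 → Fin m) × (Fin n2 → Fin m) × (Fin n2 → Fin m)

/-- the `f1`-items of an outcome. -/
def fOne {n1 n2 m : ℕ} (ω : FSSpace n1 n2 m) : Fin n1 → Fin m := ω.1
/-- the `s1`-items of an outcome. -/
def sOne {n1 n2 m : ℕ} (ω : FSSpace n1 n2 m) : Fin n1 → Fin m := ω.2.1
/-- the `f2`-items of an outcome. -/
def fTwo {n1 n2 m : ℕ} (ω : FSSpace n1 n2 m) : Fin n2 → Fin m := ω.2.2.1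
/-- the `s2`-items of an outcome. -/
def sTwo {n1 n2 m : ℕ} (ω : FSSpace n1 n2 m) : Fin n2 → Fin m := ω.2.2.2

/-- the set `F1` of an outcome. -/
def FOne {n1 n2 m : ℕ} (ω : FSSpace n1 n2 m) : Finset (Fin m) := Finset.univ.image (fOne ω)
/-- the set `F2` of an outcome. -/
def FTwo {n1 n2 m : ℕ} (ω : FSSpace n1 n2 m) : Finset (Fin m) := Finset.univ.image (fTwo ω)

/-- an outcome is valid if each `s1`- and `f2`-item avoids `F1` and each `s2`-item
avoids `F1 ∪ F2`, as in the sequential random process. -/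
def FSValid {n1 n2 m : ℕ} (ω : FSSpace n1 n2 m) : Prop :=
  (∀ x, sOne ω x ∉ FOne ω) ∧ (∀ y, fTwo ω y ∉ FOne ω) ∧
    (∀ y, sTwo ω y ∉ FOne ω ∪ FTwo ω)

/-- the probability of a single outcome under the sequential random process:
the `f1`-items are independent and uniform on the `m` items, then the `s1`- and
`f2`-items are independent and uniform on the items outside `F1`, then the
`s2`-items are independent and uniform on the items outside `F1 ∪ F2`. -/
def fsWeight (n1 n2 m : ℕ) (ω : FSSpace n1 n2 m) : ℝ :=
  if FSValid ω then
    (1 / (m : ℝ)) ^ n1 * (1 / ((m : ℝ) - (FOne ω).card)) ^ (n1 + n2) *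
      (1 / ((m : ℝ) - ((FOne ω) ∪ (FTwo ω)).card)) ^ n2
  else 0

/-- the probability of an event in the random fs-relation graph model. -/
def fsProb (n1 n2 m : ℕ) (S : FSSpace n1 n2 m → Prop) : ℝ :=
  ∑ ω : FSSpace n1 n2 m, if S ω then fsWeight n1 n2 m ω else 0

/-- the expectation of a random variable in the random fs-relation graph model. -/
def fsExp (n1 n2 m : ℕ) (f : FSSpace n1 n2 m → ℝ) : ℝ :=
  ∑ ω : FSSpace n1 n2 m, fsWeight n1 n2 m ω * f ω

/-- the index set `T` of tuples `(x1, x2, y1, y2)` with `x1 < x2` and `y1 ≠ y2`. -/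
def Ttup (n1 n2 : ℕ) : Finset (Fin n1 × Fin n1 × Fin n2 × Fin n2) :=
  Finset.univ.filter fun v => v.1 < v.2.1 ∧ v.2.2.1 ≠ v.2.2.2

/-- the event `{Z_v = 1}`, i.e. `f1(x1) = f1(x2)`, `f2(y1) = s1(x1)`, `f2(y2) = s1(x2)`. -/
def ZEvent {n1 n2 m : ℕ} (v : Fin n1 × Fin n1 × Fin n2 × Fin n2)
    (ω : FSSpace n1 n2 m) : Prop :=
  fOne ω v.1 = fOne ω v.2.1 ∧ fTwo ω v.2.2.1 = sOne ω v.1 ∧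
    fTwo ω v.2.2.2 = sOne ω v.2.1

/-- the indicator random variable `Z_v`. -/
def Zind {n1 n2 m : ℕ} (v : Fin n1 × Fin n1 × Fin n2 × Fin n2)
    (ω : FSSpace n1 n2 m) : ℝ :=
  if ZEvent v ω then 1 else 0

/-- the random variable `Z = ∑_{v ∈ T} Z_v`. -/
def Ztotal (n1 n2 m : ℕ) (ω : FSSpace n1 n2 m) : ℝ :=
  ∑ v ∈ Ttup n1 n2, Zind v ω

/-- `T_h(v)`: the tuples `w ∈ T \ {v}` that are `h`-common to `v`,
i.e. `|{x1, x2} ∩ {x1', x2'}| = h`. -/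
def Tcommon (n1 n2 : ℕ) (h : ℕ) (v : Fin n1 × Fin n1 × Fin n2 × Fin n2) :
    Finset (Fin n1 × Fin n1 × Fin n2 × Fin n2) :=
  (Ttup n1 n2).filter fun w =>
    w ≠ v ∧ (({v.1, v.2.1} : Finset (Fin n1)) ∩ ({w.1, w.2.1} : Finset (Fin n1))).card = h

/-- the edge of applicant `a` (first or second category) joins items `p` and `q`
in the fs-relation graph of the outcome `ω`. -/
def fsJoins {n1 n2 m : ℕ} (ω : FSSpace n1 n2 m) (a : Fin n1 ⊕ Fin n2)
    (p q : Fin m) : Prop :=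
  Sum.elim (fun x => (fOne ω x = p ∧ sOne ω x = q) ∨ (fOne ω x = q ∧ sOne ω x = p))
    (fun y => (fTwo ω y = p ∧ sTwo ω y = q) ∨ (fTwo ω y = q ∧ sTwo ω y = p)) a

/-- the fs-relation graph of the outcome contains a cycle: a closed walk on `ℓ ≥ 2`
distinct vertices using `ℓ` distinct edges. -/
def fsHasCycle {n1 n2 m : ℕ} (ω : FSSpace n1 n2 m) : Prop :=
  ∃ (ℓ : ℕ) (u : ℕ → Fin m) (c : ℕ → Fin n1 ⊕ Fin n2),
    2 ≤ ℓ ∧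
    (∀ i j, i < ℓ → j < ℓ → u i = u j → i = j) ∧
    (∀ i j, i < ℓ → j < ℓ → c i = c j → i = j) ∧
    (∀ i, i < ℓ → fsJoins ω (c i) (u i) (u ((i + 1) % ℓ)))

/-- the fs-relation graph of the outcome contains a simple path with `ℓ ≥ 4`
distinct edges and `ℓ + 1` distinct vertices. -/
def fsHasLongPath {n1 n2 m : ℕ} (ω : FSSpace n1 n2 m) : Prop :=
  ∃ (ℓ : ℕ) (v : ℕ → Fin m) (e : ℕ → Fin n1 ⊕ Fin n2),
    4 ≤ ℓ ∧
    (∀ i j, i ≤ ℓ → j ≤ ℓ → v i = v j → i = j) ∧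
    (∀ i j, i < ℓ → j < ℓ → e i = e j → i = j) ∧
    (∀ i, i < ℓ → fsJoins ω (e i) (v i) (v (i + 1)))

lemma sum_ite_const {α : Type*} [Fintype α] (p : α → Prop) [DecidablePred p] (r : ℝ) :
    ∑ a : α, (if p a then r else 0) = ((univ.filter p).card : ℝ) * r := by
  rw [Finset.sum_ite, Finset.sum_const_zero, add_zero, Finset.sum_const, nsmul_eq_mul]

lemma count_pi {k m : ℕ} (V : Fin k → Finset (Fin m)) :
    ((univ : Finset (Fin k → Fin m)).filter fun g => ∀ i, g i ∈ V i).card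
      = ∏ i, (V i).card := by
  rw [show (univ : Finset (Fin k → Fin m)).filter (fun g => ∀ i, g i ∈ V i)
      = Fintype.piFinset V from by ext g; simp [Fintype.mem_piFinset],
    Fintype.card_piFinset]

lemma count_pin {k m : ℕ} (V : Finset (Fin m)) (Y : Finset (Fin k)) (t : Fin k → Fin m) :
    ((univ : Finset (Fin k → Fin m)).filter fun g =>
        (∀ i, g i ∈ V) ∧ ∀ i ∈ Y, g i = t i).card ≤ V.card ^ (k - Y.card) := by
  have h1 : ((univ : Finset (Fin k → Fin m)).filter fun g =>
      (∀ i, g i ∈ V) ∧ ∀ i ∈ Y, g i = t i)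
      = (univ : Finset (Fin k → Fin m)).filter
        (fun g => ∀ i, g i ∈ (if i ∈ Y then V ∩ {t i} else V)) := by
    apply Finset.filter_congr
    intro g _
    constructor
    · rintro ⟨hV, hY⟩ i
      by_cases hi : i ∈ Y
      · rw [if_pos hi]
        exact Finset.mem_inter.2 ⟨hV i, Finset.mem_singleton.2 (hY i hi)⟩
      · simp [hi, hV i]
    · intro h
      constructor
      · intro i; have := h i; split_ifs at this with hi
        · exact (Finset.mem_inter.1 this).1
        · exact this
      · intro i hi; have := h i; rw [if_pos hi] at this
        simpa using (Finset.mem_inter.1 this).2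
  rw [h1, count_pi]
  calc ∏ i, (if i ∈ Y then V ∩ {t i} else V).card
      ≤ ∏ i, (if i ∈ Y then 1 else V.card) := by
        apply Finset.prod_le_prod (fun _ _ => Nat.zero_le _) (fun _ _ => ?_)
        split_ifs with hi
        · exact (Finset.card_le_card Finset.inter_subset_right).trans (by simp)
        · exact le_refl _
    _ = V.card ^ (k - Y.card) := by
        rw [Finset.prod_ite, Finset.prod_const, Finset.prod_const, one_pow, one_mul]
        congr 1
        have : (univ.filter fun i => ¬ i ∈ Y) = Yᶜ := by ext i; simp
        rw [this, Finset.card_compl, Fintype.card_fin]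

lemma count_coll {k m : ℕ} (V : Finset (Fin m)) (hV : V.Nonempty)
    (b1 b2 : Fin k) (hb : b1 ≠ b2) :
    ((univ : Finset (Fin k → Fin m)).filter fun g =>
        (∀ i, g i ∈ V) ∧ g b2 = g b1).card ≤ V.card ^ (k - 1) := by
  obtain ⟨v0, hv0⟩ := hV
  have hle := Finset.card_le_card_of_injOn (f := fun g => Function.update g b2 v0)
    (s := (univ : Finset (Fin k → Fin m)).filter fun g => (∀ i, g i ∈ V) ∧ g b2 = g b1)
    (t := (univ : Finset (Fin k → Fin m)).filter
        (fun g => ∀ i, g i ∈ (if i = b2 then {v0} else V)))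
    ?_ ?_
  · refine hle.trans ?_
    rw [count_pi]
    calc ∏ i, (if i = b2 then ({v0} : Finset (Fin m)) else V).card
        ≤ ∏ i, (if i = b2 then 1 else V.card) := by
          apply Finset.prod_le_prod (fun _ _ => Nat.zero_le _) (fun _ _ => ?_)
          split_ifs
          · simp
          · exact le_refl _
      _ = V.card ^ (k - 1) := by
          rw [Finset.prod_ite, Finset.prod_const, Finset.prod_const, one_pow, one_mul]
          congr 1
          have : (univ.filter fun i => ¬ i = b2) = ({b2} : Finset (Fin k))ᶜ := by
            ext i; simp
          rw [this, Finset.card_compl, Fintype.card_fin, Finset.card_singleton]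
  · intro g hg
    simp only [Finset.mem_coe, Finset.mem_filter, Finset.mem_univ, true_and] at hg ⊢
    intro i
    by_cases hi : i = b2
    · simp [hi, Function.update]
    · simp [hi, Function.update, hg.1 i]
  · intro g hg g' hg' h
    simp only [Finset.coe_filter, Set.mem_setOf_eq, Finset.mem_univ, true_and] at hg hg'
    funext i
    by_cases hi : i = b2
    · subst hi
      rw [hg.2, hg'.2]
      have := congrFun h b1
      simpa only [Function.update_of_ne hb] using this
    · have := congrFun h i
      simpa [Function.update, hi] using this

lemma count_eq3 {k m : ℕ} (hm : 0 < m) (a0 a1 a2 : Fin k)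
    (h01 : a0 ≠ a1) (h02 : a0 ≠ a2) (h12 : a1 ≠ a2) :
    ((univ : Finset (Fin k → Fin m)).filter fun g =>
        g a1 = g a0 ∧ g a2 = g a0).card ≤ m ^ (k - 2) := by
  set v0 : Fin m := ⟨0, hm⟩
  have hle := Finset.card_le_card_of_injOn
    (f := fun g => Function.update (Function.update g a1 v0) a2 v0)
    (s := (univ : Finset (Fin k → Fin m)).filter fun g => g a1 = g a0 ∧ g a2 = g a0)
    (t := (univ : Finset (Fin k → Fin m)).filter
        (fun g => ∀ i, g i ∈ (if i ∈ ({a1, a2} : Finset (Fin k)) then {v0} else univ)))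
    ?_ ?_
  · refine hle.trans ?_
    rw [count_pi]
    calc ∏ i, (if i ∈ ({a1, a2} : Finset (Fin k)) then ({v0} : Finset (Fin m)) else univ).card
        ≤ ∏ i, (if i ∈ ({a1, a2} : Finset (Fin k)) then 1 else m) := by
          apply Finset.prod_le_prod (fun _ _ => Nat.zero_le _) (fun _ _ => ?_)
          split_ifs
          · simp
          · simp
      _ = m ^ (k - 2) := by
          rw [Finset.prod_ite, Finset.prod_const, Finset.prod_const, one_pow, one_mul]
          congr 1
          have : (univ.filter fun i => ¬ i ∈ ({a1, a2} : Finset (Fin k)))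
              = ({a1, a2} : Finset (Fin k))ᶜ := by ext i; simp
          rw [this, Finset.card_compl, Fintype.card_fin, Finset.card_pair h12]
  · intro g _
    simp only [Finset.mem_coe, Finset.mem_filter, Finset.mem_univ, true_and]
    intro i
    by_cases h1 : i = a2
    · simp [h1, Function.update]
    · by_cases h2 : i = a1
      · simp [h1, h2, Function.update]
      · simp [h1, h2, Function.update]
  · intro g hg g' hg' h
    simp only [Finset.coe_filter, Set.mem_setOf_eq, Finset.mem_univ, true_and] at hg hg'
    have hoff : ∀ i, i ≠ a1 → i ≠ a2 → g i = g' i := by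
      intro i hi1 hi2
      have := congrFun h i
      simpa only [Function.update_of_ne hi1, Function.update_of_ne hi2] using this
    have h0 : g a0 = g' a0 := hoff a0 h01 h02
    funext i
    by_cases h1 : i = a1
    · rw [h1, hg.1, hg'.1, h0]
    · by_cases h2 : i = a2
      · rw [h2, hg.2, hg'.2, h0]
      · exact hoff i h1 h2
section Basic
variable {n1 n2 m : ℕ}

lemma fsWeight_nonneg (hm : n1 + n2 < m) (ω : FSSpace n1 n2 m) :
    0 ≤ fsWeight n1 n2 m ω := by
  unfold fsWeight
  split_ifs
  · have h1 : ((FOne ω).card : ℝ) ≤ (m : ℝ) := by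
      have : (FOne ω).card ≤ m := (Finset.card_le_univ _).trans (by simp)
      exact_mod_cast this
    have h2 : (((FOne ω) ∪ (FTwo ω)).card : ℝ) ≤ (m : ℝ) := by
      have : ((FOne ω) ∪ (FTwo ω)).card ≤ m := (Finset.card_le_univ _).trans (by simp)
      exact_mod_cast this
    have h3 : (0:ℝ) ≤ 1 / (m : ℝ) := by positivity
    refine mul_nonneg (mul_nonneg (pow_nonneg h3 _) (pow_nonneg ?_ _)) (pow_nonneg ?_ _)
    · exact one_div_nonneg.2 (by linarith)
    · exact one_div_nonneg.2 (by linarith)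
  · exact le_refl _

lemma fsProb_mono (hm : n1 + n2 < m) {S S' : FSSpace n1 n2 m → Prop}
    (h : ∀ ω, S ω → S' ω) : fsProb n1 n2 m S ≤ fsProb n1 n2 m S' := by
  apply Finset.sum_le_sum
  intro ω _
  by_cases hS : S ω
  · rw [if_pos hS, if_pos (h ω hS)]
  · rw [if_neg hS]
    split_ifs
    · exact fsWeight_nonneg hm ω
    · exact le_refl _

lemma fsExp_ind (v w : Fin n1 × Fin n1 × Fin n2 × Fin n2) :
    fsExp n1 n2 m (fun ω => Zind v ω * Zind w ω)
      = fsProb n1 n2 m (fun ω => ZEvent v ω ∧ ZEvent w ω) := by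
  unfold fsExp fsProb Zind
  apply Finset.sum_congr rfl
  intro ω _
  by_cases h1 : ZEvent v ω <;> by_cases h2 : ZEvent w ω <;> simp [h1, h2]

end Basic

section Pair
variable {α : Type*} [DecidableEq α]

lemma pair_inter_one {a b x y : α} (hab : a ≠ b) (hxy : x ≠ y)
    (h : ((({a, b} : Finset α)) ∩ {x, y}).card = 1) :
    (x ∈ ({a, b} : Finset α) ∧ y ∉ ({a, b} : Finset α)) ∨
      (y ∈ ({a, b} : Finset α) ∧ x ∉ ({a, b} : Finset α)) := by
  by_cases hx : x ∈ ({a, b} : Finset α) <;> by_cases hy : y ∈ ({a, b} : Finset α)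
  · exfalso
    have hsub : ({x, y} : Finset α) ⊆ ({a, b} : Finset α) ∩ {x, y} := by
      intro z hz
      rcases Finset.mem_insert.1 hz with rfl | hz
      · exact Finset.mem_inter.2 ⟨hx, by simp⟩
      · rw [Finset.mem_singleton.1 hz]
        exact Finset.mem_inter.2 ⟨hy, by simp⟩
    have := (Finset.card_le_card hsub)
    rw [Finset.card_pair hxy, h] at this
    omega
  · exact Or.inl ⟨hx, hy⟩
  · exact Or.inr ⟨hy, hx⟩
  · exfalso
    have : (({a, b} : Finset α)) ∩ {x, y} = ∅ := by
      apply Finset.eq_empty_of_forall_notMem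
      intro z hz
      obtain ⟨h1, h2⟩ := Finset.mem_inter.1 hz
      rcases Finset.mem_insert.1 h2 with rfl | h2
      · exact hx h1
      · rw [Finset.mem_singleton.1 h2] at h1; exact hy h1
    rw [this] at h
    simp at h

lemma pair_inter_card_le {a b x y : α} (hab : a ≠ b) :
    ((({a, b} : Finset α)) ∩ {x, y}).card ≤ 2 := by
  refine (Finset.card_le_card Finset.inter_subset_left).trans ?_
  rw [Finset.card_pair hab]

lemma pair_inter_two {a b x y : α} (hab : a ≠ b) (hxy : x ≠ y)
    (h : ((({a, b} : Finset α)) ∩ {x, y}).card = 2) :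
    (x = a ∧ y = b) ∨ (x = b ∧ y = a) := by
  have hx : x ∈ ({a, b} : Finset α) := by
    by_contra hx
    have hsub : (({a, b} : Finset α)) ∩ {x, y} ⊆ {y} := by
      intro z hz
      obtain ⟨h1, h2⟩ := Finset.mem_inter.1 hz
      rcases Finset.mem_insert.1 h2 with rfl | h2
      · exact absurd h1 hx
      · exact h2
    have := (Finset.card_le_card hsub)
    rw [h, Finset.card_singleton] at this
    omega
  have hy : y ∈ ({a, b} : Finset α) := by
    by_contra hy
    have hsub : (({a, b} : Finset α)) ∩ {x, y} ⊆ {x} := by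
      intro z hz
      obtain ⟨h1, h2⟩ := Finset.mem_inter.1 hz
      rcases Finset.mem_insert.1 h2 with rfl | h2
      · simp
      · rw [Finset.mem_singleton.1 h2] at h1; exact absurd h1 hy
    have := (Finset.card_le_card hsub)
    rw [h, Finset.card_singleton] at this
    omega
  rcases Finset.mem_insert.1 hx with rfl | hx2
  · left
    refine ⟨rfl, ?_⟩
    rcases Finset.mem_insert.1 hy with rfl | hy2
    · exact absurd rfl hxy
    · exact Finset.mem_singleton.1 hy2
  · right
    have hxb := Finset.mem_singleton.1 hx2
    refine ⟨hxb, ?_⟩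
    rcases Finset.mem_insert.1 hy with rfl | hy2
    · rfl
    · exfalso
      exact hxy (hxb.trans (Finset.mem_singleton.1 hy2).symm)

end Pair
section Marg
variable {n1 n2 m : ℕ}

lemma fsProb_triple (hm : n1 + n2 < m)
    (S : (Fin n1 → Fin m) → (Fin n1 → Fin m) → (Fin n2 → Fin m) → Prop) :
    fsProb n1 n2 m (fun ω => S ω.1 ω.2.1 ω.2.2.1)
      = ∑ f1 : Fin n1 → Fin m, ∑ s1 : Fin n1 → Fin m, ∑ f2 : Fin n2 → Fin m,
          (if S f1 s1 f2 ∧ (∀ x, s1 x ∉ univ.image f1) ∧ (∀ y, f2 y ∉ univ.image f1)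
            then (1/(m:ℝ))^n1 * (1/((m:ℝ) - ((univ.image f1).card : ℝ)))^(n1+n2)
            else 0) := by
  unfold fsProb
  rw [Fintype.sum_prod_type]
  refine Finset.sum_congr rfl fun f1 _ => ?_
  rw [Fintype.sum_prod_type]
  refine Finset.sum_congr rfl fun s1 _ => ?_
  rw [Fintype.sum_prod_type]
  refine Finset.sum_congr rfl fun f2 _ => ?_
  by_cases hc1 : S f1 s1 f2 ∧ (∀ x, s1 x ∉ univ.image f1) ∧ (∀ y, f2 y ∉ univ.image f1)
  · rw [if_pos hc1]
    set U : Finset (Fin m) := (univ.image f1) ∪ (univ.image f2) with hU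
    have hUcard : U.card ≤ n1 + n2 := by
      refine (Finset.card_union_le _ _).trans (add_le_add ?_ ?_)
      · exact Finset.card_image_le.trans (by simp)
      · exact Finset.card_image_le.trans (by simp)
    have hUm : U.card < m := lt_of_le_of_lt hUcard hm
    have hxpos : (0:ℝ) < (m:ℝ) - U.card := by
      have : (U.card : ℝ) < (m : ℝ) := by exact_mod_cast hUm
      linarith
    set X : ℝ := (1/(m:ℝ))^n1 * (1/((m:ℝ) - ((univ.image f1).card : ℝ)))^(n1+n2)
      with hX
    have key : ∀ s2 : Fin n2 → Fin m,
        (if S (f1, s1, f2, s2).1 (f1, s1, f2, s2).2.1 (f1, s1, f2, s2).2.2.1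
          then fsWeight n1 n2 m (f1, s1, f2, s2) else 0)
        = if (∀ y, s2 y ∉ U) then X * (1/((m:ℝ) - (U.card : ℝ)))^n2 else 0 := by
      intro s2
      show (if S f1 s1 f2 then fsWeight n1 n2 m (f1, s1, f2, s2) else 0) = _
      rw [if_pos hc1.1]
      show (if FSValid (f1, s1, f2, s2) then
          (1 / (m : ℝ)) ^ n1 * (1 / ((m : ℝ) - ((univ.image f1).card : ℝ))) ^ (n1 + n2) *
            (1 / ((m : ℝ) - (U.card : ℝ))) ^ n2
        else 0) = _
      refine if_congr ?_ (by rw [hX]) rfl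
      constructor
      · intro h; exact h.2.2
      · intro h; exact ⟨hc1.2.1, hc1.2.2, h⟩
    rw [Finset.sum_congr rfl fun s2 _ => key s2, sum_ite_const]
    have hfilter : (univ.filter fun s2 : Fin n2 → Fin m => ∀ y, s2 y ∉ U)
        = univ.filter fun s2 : Fin n2 → Fin m => ∀ y, s2 y ∈ Uᶜ := by
      apply Finset.filter_congr; intro s2 _; simp [Finset.mem_compl]
    rw [hfilter, count_pi, Finset.prod_const, Finset.card_univ, Fintype.card_fin,
      Finset.card_compl, Fintype.card_fin]
    have hcast : ((m - U.card : ℕ) : ℝ) = (m:ℝ) - U.card := by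
      rw [Nat.cast_sub hUm.le]
    rw [Nat.cast_pow, hcast]
    have hone : ((m:ℝ) - U.card) ^ n2 * (1/((m:ℝ) - (U.card : ℝ)))^n2 = 1 := by
      rw [← mul_pow, mul_one_div, div_self hxpos.ne', one_pow]
    calc ((m:ℝ) - U.card) ^ n2 * (X * (1/((m:ℝ) - (U.card : ℝ)))^n2)
        = X * (((m:ℝ) - U.card) ^ n2 * (1/((m:ℝ) - (U.card : ℝ)))^n2) := by ring
      _ = X := by rw [hone, mul_one]
  · rw [if_neg hc1]
    apply Finset.sum_eq_zero
    intro s2 _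
    show (if S f1 s1 f2 then fsWeight n1 n2 m (f1, s1, f2, s2) else 0) = 0
    by_cases hS : S f1 s1 f2
    · rw [if_pos hS]
      unfold fsWeight
      rw [if_neg]
      intro hval
      exact hc1 ⟨hS, fun x => hval.1 x, fun y => hval.2.1 y⟩
    · rw [if_neg hS]

end Marg
section Master
variable {n1 n2 m : ℕ} {c : ℝ}

lemma master (hc : 1 < c) (hm : n1 + n2 < m)
    (hmc : (m : ℝ) / c ≤ (m : ℝ) - (n1 : ℝ))
    (a0 a1 a2 : Fin n1) (h01 : a0 ≠ a1) (h02 : a0 ≠ a2) (h12 : a1 ≠ a2)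
    (Y : Finset (Fin n2)) (g : Fin n2 → Fin n1)
    (j : ℕ) (b1 b2 : Fin n1) (hj : j = 0 ∨ (j = 1 ∧ b1 ≠ b2)) :
    fsProb n1 n2 m (fun ω => (fOne ω a1 = fOne ω a0 ∧ fOne ω a2 = fOne ω a0) ∧
      (∀ y ∈ Y, fTwo ω y = sOne ω (g y)) ∧ (j = 1 → sOne ω b2 = sOne ω b1)) ≤
    (1 / (m : ℝ)) ^ 2 * (c / m) ^ (Y.card + j) := by
  have hm0 : 0 < m := by omega
  have hmr : (0:ℝ) < m := by exact_mod_cast hm0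
  have hc0 : (0:ℝ) < c := by linarith
  have hn1m : n1 < m := by omega
  have hn1r : (n1 : ℝ) < m := by exact_mod_cast hn1m
  have hmc0 : (0:ℝ) < (m:ℝ) / c := by positivity
  have hjn1 : j ≤ n1 := by
    rcases hj with rfl | ⟨rfl, _⟩
    · omega
    · have := b1.pos
      omega
  have hYn2 : Y.card ≤ n2 := Y.card_le_univ.trans (by simp)
  have h2n1 : 2 ≤ n1 := by
    have := Finset.card_le_univ ({a0, a1} : Finset (Fin n1))
    rw [Finset.card_pair h01] at this
    simpa using this
  have hsub2 : n1 - 2 + 2 = n1 := by omega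
  set P : ℝ := (1/(m:ℝ))^n1 with hP
  have hPnn : 0 ≤ P := by positivity
  have hKfacts : ∀ f1 : Fin n1 → Fin m,
      ((univ.image f1).card ≤ n1 ∧ (0:ℝ) < (m:ℝ) - ((univ.image f1).card : ℝ)) := by
    intro f1
    have h1 : (univ.image f1).card ≤ n1 := Finset.card_image_le.trans (by simp)
    refine ⟨h1, ?_⟩
    have : ((univ.image f1).card : ℝ) ≤ (n1 : ℝ) := by exact_mod_cast h1
    linarith
  calc fsProb n1 n2 m _
      = ∑ f1 : Fin n1 → Fin m, ∑ s1 : Fin n1 → Fin m, ∑ f2 : Fin n2 → Fin m,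
          (if ((f1 a1 = f1 a0 ∧ f1 a2 = f1 a0) ∧ (∀ y ∈ Y, f2 y = s1 (g y)) ∧
                (j = 1 → s1 b2 = s1 b1))
              ∧ (∀ x, s1 x ∉ univ.image f1) ∧ (∀ y, f2 y ∉ univ.image f1)
            then P * (1/((m:ℝ) - ((univ.image f1).card : ℝ)))^(n1+n2) else 0) := by
        refine (fsProb_triple hm (fun f1 s1 f2 => (f1 a1 = f1 a0 ∧ f1 a2 = f1 a0) ∧
          (∀ y ∈ Y, f2 y = s1 (g y)) ∧ (j = 1 → s1 b2 = s1 b1))).trans ?_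
        refine Finset.sum_congr rfl fun f1 _ => Finset.sum_congr rfl fun s1 _ =>
          Finset.sum_congr rfl fun f2 _ => ?_
        split_ifs <;> rfl
    _ ≤ ∑ f1 : Fin n1 → Fin m,
          (if f1 a1 = f1 a0 ∧ f1 a2 = f1 a0 then P * (c/(m:ℝ))^(Y.card + j) else 0) := by
        refine Finset.sum_le_sum fun f1 _ => ?_
        set K : Finset (Fin m) := univ.image f1 with hK
        set x : ℝ := (m:ℝ) - (K.card : ℝ) with hx
        obtain ⟨hK1, hxpos⟩ := hKfacts f1
        have hKm : K.card ≤ n1 := hK1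
        have hKlt : K.card < m := lt_of_le_of_lt hKm hn1m
        have hVcard : (Kᶜ).card = m - K.card := by
          rw [Finset.card_compl, Fintype.card_fin]
        have hVcast : ((Kᶜ).card : ℝ) = x := by
          rw [hVcard, Nat.cast_sub hKlt.le, hx]
        have hVne : (Kᶜ).Nonempty := by
          rw [← Finset.card_pos, hVcard]
          omega
        have hQnn : (0:ℝ) ≤ (1/x)^(n1+n2) := by positivity
        -- step over f2
        have stepf2 : ∀ s1 : Fin n1 → Fin m,
            (∑ f2 : Fin n2 → Fin m,
              (if ((f1 a1 = f1 a0 ∧ f1 a2 = f1 a0) ∧ (∀ y ∈ Y, f2 y = s1 (g y)) ∧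
                    (j = 1 → s1 b2 = s1 b1))
                  ∧ (∀ x, s1 x ∉ K) ∧ (∀ y, f2 y ∉ K)
                then P * (1/x)^(n1+n2) else 0))
            ≤ (if (f1 a1 = f1 a0 ∧ f1 a2 = f1 a0) ∧ (j = 1 → s1 b2 = s1 b1) ∧
                  (∀ x, s1 x ∉ K)
                then (((Kᶜ).card : ℝ) ^ (n2 - Y.card)) * (P * (1/x)^(n1+n2)) else 0) := by
          intro s1
          by_cases h : (f1 a1 = f1 a0 ∧ f1 a2 = f1 a0) ∧ (j = 1 → s1 b2 = s1 b1) ∧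
              (∀ x, s1 x ∉ K)
          · rw [if_pos h]
            have hcong : ∀ f2 : Fin n2 → Fin m,
                (if ((f1 a1 = f1 a0 ∧ f1 a2 = f1 a0) ∧ (∀ y ∈ Y, f2 y = s1 (g y)) ∧
                      (j = 1 → s1 b2 = s1 b1))
                    ∧ (∀ x, s1 x ∉ K) ∧ (∀ y, f2 y ∉ K)
                  then P * (1/x)^(n1+n2) else 0)
                = (if (∀ y, f2 y ∈ Kᶜ) ∧ (∀ y ∈ Y, f2 y = s1 (g y))
                  then P * (1/x)^(n1+n2) else 0) := by
              intro f2
              refine if_congr ⟨?_, ?_⟩ rfl rfl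
              · rintro ⟨⟨_, hEY, _⟩, _, hB⟩
                exact ⟨fun y => Finset.mem_compl.2 (hB y), hEY⟩
              · rintro ⟨hB, hEY⟩
                exact ⟨⟨h.1, hEY, h.2.1⟩, h.2.2, fun y => Finset.mem_compl.1 (hB y)⟩
            rw [Finset.sum_congr rfl fun f2 _ => hcong f2, sum_ite_const]
            refine mul_le_mul_of_nonneg_right ?_ (mul_nonneg hPnn hQnn)
            exact_mod_cast count_pin Kᶜ Y (fun y => s1 (g y))
          · rw [if_neg h]
            refine le_of_eq (Finset.sum_eq_zero fun f2 _ => ?_)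
            rw [if_neg]
            rintro ⟨⟨hE1, _, hEC⟩, hA, _⟩
            exact h ⟨hE1, hEC, hA⟩
        -- step over s1
        have steps1 :
            (∑ s1 : Fin n1 → Fin m,
              (if (f1 a1 = f1 a0 ∧ f1 a2 = f1 a0) ∧ (j = 1 → s1 b2 = s1 b1) ∧
                  (∀ x, s1 x ∉ K)
                then (((Kᶜ).card : ℝ) ^ (n2 - Y.card)) * (P * (1/x)^(n1+n2)) else 0))
            ≤ (if f1 a1 = f1 a0 ∧ f1 a2 = f1 a0
                then (((Kᶜ).card : ℝ) ^ (n1 - j)) *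
                  ((((Kᶜ).card : ℝ) ^ (n2 - Y.card)) * (P * (1/x)^(n1+n2))) else 0) := by
          by_cases hE : f1 a1 = f1 a0 ∧ f1 a2 = f1 a0
          · rw [if_pos hE]
            have hcong : ∀ s1 : Fin n1 → Fin m,
                (if (f1 a1 = f1 a0 ∧ f1 a2 = f1 a0) ∧ (j = 1 → s1 b2 = s1 b1) ∧
                    (∀ x, s1 x ∉ K)
                  then (((Kᶜ).card : ℝ) ^ (n2 - Y.card)) * (P * (1/x)^(n1+n2)) else 0)
                = (if (j = 1 → s1 b2 = s1 b1) ∧ (∀ x, s1 x ∈ Kᶜ)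
                  then (((Kᶜ).card : ℝ) ^ (n2 - Y.card)) * (P * (1/x)^(n1+n2)) else 0) := by
              intro s1
              refine if_congr ⟨?_, ?_⟩ rfl rfl
              · rintro ⟨_, hEC, hA⟩
                exact ⟨hEC, fun z => Finset.mem_compl.2 (hA z)⟩
              · rintro ⟨hEC, hA⟩
                exact ⟨hE, hEC, fun z => Finset.mem_compl.1 (hA z)⟩
            rw [Finset.sum_congr rfl fun s1 _ => hcong s1, sum_ite_const]
            refine mul_le_mul_of_nonneg_right ?_ (mul_nonneg (by positivity) (mul_nonneg hPnn hQnn))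
            have hcount : ((univ : Finset (Fin n1 → Fin m)).filter fun s1 =>
                (j = 1 → s1 b2 = s1 b1) ∧ (∀ x, s1 x ∈ Kᶜ)).card ≤ (Kᶜ).card ^ (n1 - j) := by
              rcases hj with hj0 | ⟨hj1, hb⟩
              · subst hj0
                have : ((univ : Finset (Fin n1 → Fin m)).filter fun s1 =>
                    (0 = 1 → s1 b2 = s1 b1) ∧ (∀ x, s1 x ∈ Kᶜ))
                    = ((univ : Finset (Fin n1 → Fin m)).filter fun s1 =>
                      (∀ x, s1 x ∈ Kᶜ) ∧ ∀ i ∈ (∅ : Finset (Fin n1)), s1 i = s1 i) := by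
                  apply Finset.filter_congr
                  intro s1 _
                  constructor
                  · rintro ⟨_, hA⟩; exact ⟨hA, by simp⟩
                  · rintro ⟨hA, _⟩; exact ⟨by omega, hA⟩
                rw [this]
                simpa using count_pin Kᶜ (∅ : Finset (Fin n1)) (fun i => f1 i)
              · subst hj1
                have : ((univ : Finset (Fin n1 → Fin m)).filter fun s1 =>
                    (1 = 1 → s1 b2 = s1 b1) ∧ (∀ x, s1 x ∈ Kᶜ))
                    = ((univ : Finset (Fin n1 → Fin m)).filter fun s1 =>
                      (∀ x, s1 x ∈ Kᶜ) ∧ s1 b2 = s1 b1) := by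
                  apply Finset.filter_congr
                  intro s1 _
                  constructor
                  · rintro ⟨hEC, hA⟩; exact ⟨hA, hEC rfl⟩
                  · rintro ⟨hA, hEC⟩; exact ⟨fun _ => hEC, hA⟩
                rw [this]
                exact count_coll Kᶜ hVne b1 b2 hb
            exact_mod_cast hcount
          · rw [if_neg hE]
            refine le_of_eq (Finset.sum_eq_zero fun s1 _ => ?_)
            rw [if_neg]
            rintro ⟨hE1, _, _⟩
            exact hE hE1
        calc (∑ s1 : Fin n1 → Fin m, ∑ f2 : Fin n2 → Fin m,
              (if ((f1 a1 = f1 a0 ∧ f1 a2 = f1 a0) ∧ (∀ y ∈ Y, f2 y = s1 (g y)) ∧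
                    (j = 1 → s1 b2 = s1 b1))
                  ∧ (∀ x, s1 x ∉ K) ∧ (∀ y, f2 y ∉ K)
                then P * (1/x)^(n1+n2) else 0))
            ≤ ∑ s1 : Fin n1 → Fin m,
              (if (f1 a1 = f1 a0 ∧ f1 a2 = f1 a0) ∧ (j = 1 → s1 b2 = s1 b1) ∧
                  (∀ x, s1 x ∉ K)
                then (((Kᶜ).card : ℝ) ^ (n2 - Y.card)) * (P * (1/x)^(n1+n2)) else 0) :=
              Finset.sum_le_sum fun s1 _ => stepf2 s1
          _ ≤ (if f1 a1 = f1 a0 ∧ f1 a2 = f1 a0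
                then (((Kᶜ).card : ℝ) ^ (n1 - j)) *
                  ((((Kᶜ).card : ℝ) ^ (n2 - Y.card)) * (P * (1/x)^(n1+n2))) else 0) := steps1
          _ ≤ (if f1 a1 = f1 a0 ∧ f1 a2 = f1 a0 then P * (c/(m:ℝ))^(Y.card + j) else 0) := by
              split_ifs with hE
              · rw [hVcast]
                have hxne : x ≠ 0 := hxpos.ne'
                have hsplit : (1/x)^(n1+n2)
                    = (1/x)^(n1-j) * ((1/x)^(n2-Y.card) * (1/x)^(Y.card+j)) := by
                  rw [← pow_add, ← pow_add]
                  congr 1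
                  omega
                have h1 : x ^ (n1-j) * (1/x)^(n1-j) = 1 := by
                  rw [← mul_pow, mul_one_div, div_self hxne, one_pow]
                have h2 : x ^ (n2-Y.card) * (1/x)^(n2-Y.card) = 1 := by
                  rw [← mul_pow, mul_one_div, div_self hxne, one_pow]
                have heq : x ^ (n1-j) * (x ^ (n2-Y.card) * (P * (1/x)^(n1+n2)))
                    = P * (1/x)^(Y.card+j) := by
                  rw [hsplit]
                  calc x ^ (n1-j) * (x ^ (n2-Y.card) *
                        (P * ((1/x)^(n1-j) * ((1/x)^(n2-Y.card) * (1/x)^(Y.card+j)))))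
                      = (x ^ (n1-j) * (1/x)^(n1-j)) * ((x ^ (n2-Y.card) * (1/x)^(n2-Y.card)) *
                          (P * (1/x)^(Y.card+j))) := by ring
                    _ = P * (1/x)^(Y.card+j) := by rw [h1, h2, one_mul, one_mul]
                rw [heq]
                refine mul_le_mul_of_nonneg_left ?_ hPnn
                refine pow_le_pow_left₀ (by positivity) ?_ _
                have hxge : (m:ℝ)/c ≤ x := by
                  refine hmc.trans ?_
                  rw [hx]
                  have : ((K.card : ℝ)) ≤ (n1 : ℝ) := by exact_mod_cast hK1
                  linarith
                calc 1/x ≤ 1/((m:ℝ)/c) := by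
                      apply one_div_le_one_div_of_le hmc0 hxge
                  _ = c/(m:ℝ) := one_div_div _ _
              · exact le_refl _
    _ ≤ (1 / (m : ℝ)) ^ 2 * (c / m) ^ (Y.card + j) := by
        rw [sum_ite_const]
        have hcount := count_eq3 hm0 a0 a1 a2 h01 h02 h12
        have hle : ((univ.filter fun f1 : Fin n1 → Fin m =>
            f1 a1 = f1 a0 ∧ f1 a2 = f1 a0).card : ℝ) ≤ (m:ℝ) ^ (n1 - 2) := by
          exact_mod_cast hcount
        have hsplit : P = (1/(m:ℝ))^(n1-2) * (1/(m:ℝ))^2 := by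
          rw [hP, ← pow_add, hsub2]
        have h1 : (m:ℝ) ^ (n1-2) * (1/(m:ℝ))^(n1-2) = 1 := by
          rw [← mul_pow, mul_one_div, div_self hmr.ne', one_pow]
        have heq : (m:ℝ) ^ (n1 - 2) * (P * (c/(m:ℝ))^(Y.card + j))
            = (1 / (m : ℝ)) ^ 2 * (c / m) ^ (Y.card + j) := by
          rw [hsplit]
          linear_combination ((1/(m:ℝ))^2 * (c/(m:ℝ))^(Y.card + j)) * h1
        rw [← heq]
        exact mul_le_mul_of_nonneg_right hle
          (mul_nonneg hPnn (by positivity))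

end Master
section Parts
variable {n1 n2 m : ℕ} {c : ℝ}

/-- the matching predicate for 1-common tuples sharing one y. -/
def matchP {n1 n2 : ℕ} (v w : Fin n1 × Fin n1 × Fin n2 × Fin n2) : Prop :=
  (w.2.2.1 = v.2.2.1 → w.1 = v.1) ∧ (w.2.2.1 = v.2.2.2 → w.1 = v.2.1) ∧
    (w.2.2.2 = v.2.2.1 → w.2.1 = v.1) ∧ (w.2.2.2 = v.2.2.2 → w.2.1 = v.2.1)

lemma xTriple {v w : Fin n1 × Fin n1 × Fin n2 × Fin n2}
    (hv : v.1 < v.2.1) (hw : w.1 < w.2.1)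
    (hcard : (({v.1, v.2.1} : Finset (Fin n1)) ∩ {w.1, w.2.1}).card = 1) :
    ∃ a0 a1 a2 : Fin n1, a0 ≠ a1 ∧ a0 ≠ a2 ∧ a1 ≠ a2 ∧
      (∀ {m : ℕ} (ω : FSSpace n1 n2 m), fOne ω v.1 = fOne ω v.2.1 →
        fOne ω w.1 = fOne ω w.2.1 →
        (fOne ω a1 = fOne ω a0 ∧ fOne ω a2 = fOne ω a0)) := by
  rcases pair_inter_one hv.ne hw.ne hcard with ⟨hin, hout⟩ | ⟨hin, hout⟩
  · simp only [Finset.mem_insert, Finset.mem_singleton, not_or] at hin hout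
    rcases hin with h | h
    · exact ⟨v.1, v.2.1, w.2.1, hv.ne, Ne.symm hout.1, Ne.symm hout.2,
        fun ω h1 h2 => ⟨h1.symm, by rw [← h2, h]⟩⟩
    · exact ⟨v.2.1, v.1, w.2.1, hv.ne', Ne.symm hout.2, Ne.symm hout.1,
        fun ω h1 h2 => ⟨h1, by rw [← h2, h]⟩⟩
  · simp only [Finset.mem_insert, Finset.mem_singleton, not_or] at hin hout
    rcases hin with h | h
    · exact ⟨v.1, v.2.1, w.1, hv.ne, Ne.symm hout.1, Ne.symm hout.2,
        fun ω h1 h2 => ⟨h1.symm, by rw [h2, h]⟩⟩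
    · exact ⟨v.2.1, v.1, w.1, hv.ne', Ne.symm hout.2, Ne.symm hout.1,
        fun ω h1 h2 => ⟨h1, by rw [h2, h]⟩⟩

lemma part0_bound (hc : 1 < c) (hm : n1 + n2 < m)
    (hmc : (m : ℝ) / c ≤ (m : ℝ) - (n1 : ℝ))
    {v w : Fin n1 × Fin n1 × Fin n2 × Fin n2}
    (hv : v ∈ Ttup n1 n2) (hw : w ∈ Tcommon n1 n2 1 v)
    (hy0 : (({v.2.2.1, v.2.2.2} : Finset (Fin n2)) ∩ {w.2.2.1, w.2.2.2}).card = 0) :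
    fsExp n1 n2 m (fun ω => Zind v ω * Zind w ω) ≤ (1/(m:ℝ))^2 * (c/m)^4 := by
  rw [fsExp_ind]
  obtain ⟨hvx, hvy⟩ := (Finset.mem_filter.1 hv).2
  have hw' := Finset.mem_filter.1 hw
  obtain ⟨hwx, hwy⟩ := (Finset.mem_filter.1 hw'.1).2
  have hx1 := hw'.2.2
  obtain ⟨a0, a1, a2, h01, h02, h12, himp⟩ := xTriple hvx hwx hx1
  have hint : ({v.2.2.1, v.2.2.2} : Finset (Fin n2)) ∩ {w.2.2.1, w.2.2.2} = ∅ :=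
    Finset.card_eq_zero.1 hy0
  have hnm : ∀ z : Fin n2, z ∈ ({w.2.2.1, w.2.2.2} : Finset (Fin n2)) →
      z ∉ ({v.2.2.1, v.2.2.2} : Finset (Fin n2)) := by
    intro z h1 h2
    have := Finset.mem_inter.2 ⟨h2, h1⟩
    rw [hint] at this
    exact absurd this (Finset.notMem_empty z)
  have hwa := hnm w.2.2.1 (by simp)
  have hwb := hnm w.2.2.2 (by simp)
  simp only [Finset.mem_insert, Finset.mem_singleton, not_or] at hwa hwb
  obtain ⟨hne1, hne2⟩ := hwa
  obtain ⟨hne3, hne4⟩ := hwb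
  set Y : Finset (Fin n2) := {v.2.2.1, v.2.2.2, w.2.2.1, w.2.2.2} with hY
  have hYcard : Y.card = 4 := by
    rw [hY, Finset.card_insert_of_notMem (by simp [hvy, Ne.symm hne1, Ne.symm hne3]),
      Finset.card_insert_of_notMem (by simp [Ne.symm hne2, Ne.symm hne4]),
      Finset.card_insert_of_notMem (by simp [hwy]), Finset.card_singleton]
  set g : Fin n2 → Fin n1 := fun y => if y = v.2.2.1 then v.1 else
    if y = v.2.2.2 then v.2.1 else if y = w.2.2.1 then w.1 else w.2.1 with hg
  refine le_trans (fsProb_mono hm (S' := fun ω =>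
      (fOne ω a1 = fOne ω a0 ∧ fOne ω a2 = fOne ω a0) ∧
      (∀ y ∈ Y, fTwo ω y = sOne ω (g y)) ∧ ((0:ℕ) = 1 → sOne ω v.1 = sOne ω v.1)) ?_)
    (le_trans (master hc hm hmc a0 a1 a2 h01 h02 h12 Y g 0 v.1 v.1 (Or.inl rfl)) ?_)
  · rintro ω ⟨hZv, hZw⟩
    refine ⟨himp ω hZv.1 hZw.1, ?_, fun _ => rfl⟩
    intro y hy
    rw [hY] at hy
    rcases Finset.mem_insert.1 hy with rfl | hy
    · simpa [hg] using hZv.2.1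
    rcases Finset.mem_insert.1 hy with rfl | hy
    · simpa [hg, Ne.symm hvy] using hZv.2.2
    rcases Finset.mem_insert.1 hy with rfl | hy
    · simpa [hg, hne1, hne2] using hZw.2.1
    · have hyy := Finset.mem_singleton.1 hy
      subst hyy
      simpa [hg, hne3, hne4, Ne.symm hwy] using hZw.2.2
  · rw [hYcard]

end Parts
section Parts2
variable {n1 n2 m : ℕ} {c : ℝ}

lemma part1m_bound (hc : 1 < c) (hm : n1 + n2 < m)
    (hmc : (m : ℝ) / c ≤ (m : ℝ) - (n1 : ℝ))
    {v w : Fin n1 × Fin n1 × Fin n2 × Fin n2}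
    (hv : v ∈ Ttup n1 n2) (hw : w ∈ Tcommon n1 n2 1 v)
    (hy1 : (({v.2.2.1, v.2.2.2} : Finset (Fin n2)) ∩ {w.2.2.1, w.2.2.2}).card = 1) :
    fsExp n1 n2 m (fun ω => Zind v ω * Zind w ω) ≤ (1/(m:ℝ))^2 * (c/m)^3 := by
  rw [fsExp_ind]
  obtain ⟨hvx, hvy⟩ := (Finset.mem_filter.1 hv).2
  have hw' := Finset.mem_filter.1 hw
  obtain ⟨hwx, hwy⟩ := (Finset.mem_filter.1 hw'.1).2
  have hx1 := hw'.2.2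
  obtain ⟨a0, a1, a2, h01, h02, h12, himp⟩ := xTriple hvx hwx hx1
  rcases pair_inter_one hvy hwy hy1 with ⟨hin, hout⟩ | ⟨hin, hout⟩ <;>
    simp only [Finset.mem_insert, Finset.mem_singleton, not_or] at hin hout
  · -- w.2.2.1 shared, w.2.2.2 outside
    set Y : Finset (Fin n2) := {v.2.2.1, v.2.2.2, w.2.2.2} with hY
    have hYcard : Y.card = 3 := by
      rw [hY, Finset.card_insert_of_notMem (by simp [hvy, Ne.symm hout.1]),
        Finset.card_insert_of_notMem (by simp [Ne.symm hout.2]), Finset.card_singleton]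
    set g : Fin n2 → Fin n1 := fun y => if y = v.2.2.1 then v.1 else
      if y = v.2.2.2 then v.2.1 else w.2.1 with hg
    refine le_trans (fsProb_mono hm (S' := fun ω =>
        (fOne ω a1 = fOne ω a0 ∧ fOne ω a2 = fOne ω a0) ∧
        (∀ y ∈ Y, fTwo ω y = sOne ω (g y)) ∧ ((0:ℕ) = 1 → sOne ω v.1 = sOne ω v.1)) ?_)
      (le_trans (master hc hm hmc a0 a1 a2 h01 h02 h12 Y g 0 v.1 v.1 (Or.inl rfl)) ?_)
    · rintro ω ⟨hZv, hZw⟩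
      refine ⟨himp ω hZv.1 hZw.1, ?_, fun _ => rfl⟩
      intro y hy
      rw [hY] at hy
      rcases Finset.mem_insert.1 hy with rfl | hy
      · simpa [hg] using hZv.2.1
      rcases Finset.mem_insert.1 hy with rfl | hy
      · simpa [hg, Ne.symm hvy] using hZv.2.2
      · have hyy := Finset.mem_singleton.1 hy
        subst hyy
        simpa [hg, hout.1, hout.2] using hZw.2.2
    · rw [hYcard]
  · -- w.2.2.2 shared, w.2.2.1 outside
    set Y : Finset (Fin n2) := {v.2.2.1, v.2.2.2, w.2.2.1} with hY
    have hYcard : Y.card = 3 := by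
      rw [hY, Finset.card_insert_of_notMem (by simp [hvy, Ne.symm hout.1]),
        Finset.card_insert_of_notMem (by simp [Ne.symm hout.2]), Finset.card_singleton]
    set g : Fin n2 → Fin n1 := fun y => if y = v.2.2.1 then v.1 else
      if y = v.2.2.2 then v.2.1 else w.1 with hg
    refine le_trans (fsProb_mono hm (S' := fun ω =>
        (fOne ω a1 = fOne ω a0 ∧ fOne ω a2 = fOne ω a0) ∧
        (∀ y ∈ Y, fTwo ω y = sOne ω (g y)) ∧ ((0:ℕ) = 1 → sOne ω v.1 = sOne ω v.1)) ?_)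
      (le_trans (master hc hm hmc a0 a1 a2 h01 h02 h12 Y g 0 v.1 v.1 (Or.inl rfl)) ?_)
    · rintro ω ⟨hZv, hZw⟩
      refine ⟨himp ω hZv.1 hZw.1, ?_, fun _ => rfl⟩
      intro y hy
      rw [hY] at hy
      rcases Finset.mem_insert.1 hy with rfl | hy
      · simpa [hg] using hZv.2.1
      rcases Finset.mem_insert.1 hy with rfl | hy
      · simpa [hg, Ne.symm hvy] using hZv.2.2
      · have hyy := Finset.mem_singleton.1 hy
        subst hyy
        simpa [hg, hout.1, hout.2] using hZw.2.1
    · rw [hYcard]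

lemma part1mm_bound (hc : 1 < c) (hm : n1 + n2 < m)
    (hmc : (m : ℝ) / c ≤ (m : ℝ) - (n1 : ℝ))
    {v w : Fin n1 × Fin n1 × Fin n2 × Fin n2}
    (hv : v ∈ Ttup n1 n2) (hw : w ∈ Tcommon n1 n2 1 v)
    (hy1 : (({v.2.2.1, v.2.2.2} : Finset (Fin n2)) ∩ {w.2.2.1, w.2.2.2}).card = 1)
    (hnmatch : ¬ matchP v w) :
    fsExp n1 n2 m (fun ω => Zind v ω * Zind w ω) ≤ (1/(m:ℝ))^2 * (c/m)^4 := by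
  rw [fsExp_ind]
  obtain ⟨hvx, hvy⟩ := (Finset.mem_filter.1 hv).2
  have hw' := Finset.mem_filter.1 hw
  obtain ⟨hwx, hwy⟩ := (Finset.mem_filter.1 hw'.1).2
  have hx1 := hw'.2.2
  obtain ⟨a0, a1, a2, h01, h02, h12, himp⟩ := xTriple hvx hwx hx1
  rcases pair_inter_one hvy hwy hy1 with ⟨hin, hout⟩ | ⟨hin, hout⟩ <;>
    simp only [Finset.mem_insert, Finset.mem_singleton, not_or] at hin hout
  · -- w.2.2.1 shared, w.2.2.2 outside
    set Y : Finset (Fin n2) := {v.2.2.1, v.2.2.2, w.2.2.2} with hY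
    have hYcard : Y.card = 3 := by
      rw [hY, Finset.card_insert_of_notMem (by simp [hvy, Ne.symm hout.1]),
        Finset.card_insert_of_notMem (by simp [Ne.symm hout.2]), Finset.card_singleton]
    set g : Fin n2 → Fin n1 := fun y => if y = v.2.2.1 then v.1 else
      if y = v.2.2.2 then v.2.1 else w.2.1 with hg
    have hYimp : ∀ (ω : FSSpace n1 n2 m), ZEvent v ω → ZEvent w ω →
        ∀ y ∈ Y, fTwo ω y = sOne ω (g y) := by
      intro ω hZv hZw y hy
      rw [hY] at hy
      rcases Finset.mem_insert.1 hy with rfl | hy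
      · simpa [hg] using hZv.2.1
      rcases Finset.mem_insert.1 hy with rfl | hy
      · simpa [hg, Ne.symm hvy] using hZv.2.2
      · have hyy := Finset.mem_singleton.1 hy
        subst hyy
        simpa [hg, hout.1, hout.2] using hZw.2.2
    have hc3 : w.2.2.2 = v.2.2.1 → w.2.1 = v.1 := fun h => (hout.1 h).elim
    have hc4 : w.2.2.2 = v.2.2.2 → w.2.1 = v.2.1 := fun h => (hout.2 h).elim
    rcases hin with hA | hB
    · -- shared value v.2.2.1, mismatch gives w.1 ≠ v.1
      have hc2 : w.2.2.1 = v.2.2.2 → w.1 = v.2.1 :=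
        fun h => (hvy (hA.symm.trans h)).elim
      have hxne : w.1 ≠ v.1 := fun hxx => hnmatch ⟨fun _ => hxx, hc2, hc3, hc4⟩
      refine le_trans (fsProb_mono hm (S' := fun ω =>
          (fOne ω a1 = fOne ω a0 ∧ fOne ω a2 = fOne ω a0) ∧
          (∀ y ∈ Y, fTwo ω y = sOne ω (g y)) ∧ ((1:ℕ) = 1 → sOne ω w.1 = sOne ω v.1)) ?_)
        (le_trans (master hc hm hmc a0 a1 a2 h01 h02 h12 Y g 1 v.1 w.1
          (Or.inr ⟨rfl, Ne.symm hxne⟩)) ?_)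
      · rintro ω ⟨hZv, hZw⟩
        refine ⟨himp ω hZv.1 hZw.1, hYimp ω hZv hZw, fun _ => ?_⟩
        have h' := hZw.2.1
        rw [hA] at h'
        exact h'.symm.trans hZv.2.1
      · rw [hYcard]
    · -- shared value v.2.2.2, mismatch gives w.1 ≠ v.2.1
      have hc1 : w.2.2.1 = v.2.2.1 → w.1 = v.1 :=
        fun h => ((Ne.symm hvy) (hB.symm.trans h)).elim
      have hxne : w.1 ≠ v.2.1 := fun hxx => hnmatch ⟨hc1, fun _ => hxx, hc3, hc4⟩
      refine le_trans (fsProb_mono hm (S' := fun ω =>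
          (fOne ω a1 = fOne ω a0 ∧ fOne ω a2 = fOne ω a0) ∧
          (∀ y ∈ Y, fTwo ω y = sOne ω (g y)) ∧ ((1:ℕ) = 1 → sOne ω w.1 = sOne ω v.2.1)) ?_)
        (le_trans (master hc hm hmc a0 a1 a2 h01 h02 h12 Y g 1 v.2.1 w.1
          (Or.inr ⟨rfl, Ne.symm hxne⟩)) ?_)
      · rintro ω ⟨hZv, hZw⟩
        refine ⟨himp ω hZv.1 hZw.1, hYimp ω hZv hZw, fun _ => ?_⟩
        have h' := hZw.2.1
        rw [hB] at h'
        exact h'.symm.trans hZv.2.2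
      · rw [hYcard]
  · -- w.2.2.2 shared, w.2.2.1 outside
    set Y : Finset (Fin n2) := {v.2.2.1, v.2.2.2, w.2.2.1} with hY
    have hYcard : Y.card = 3 := by
      rw [hY, Finset.card_insert_of_notMem (by simp [hvy, Ne.symm hout.1]),
        Finset.card_insert_of_notMem (by simp [Ne.symm hout.2]), Finset.card_singleton]
    set g : Fin n2 → Fin n1 := fun y => if y = v.2.2.1 then v.1 else
      if y = v.2.2.2 then v.2.1 else w.1 with hg
    have hYimp : ∀ (ω : FSSpace n1 n2 m), ZEvent v ω → ZEvent w ω →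
        ∀ y ∈ Y, fTwo ω y = sOne ω (g y) := by
      intro ω hZv hZw y hy
      rw [hY] at hy
      rcases Finset.mem_insert.1 hy with rfl | hy
      · simpa [hg] using hZv.2.1
      rcases Finset.mem_insert.1 hy with rfl | hy
      · simpa [hg, Ne.symm hvy] using hZv.2.2
      · have hyy := Finset.mem_singleton.1 hy
        subst hyy
        simpa [hg, hout.1, hout.2] using hZw.2.1
    have hc1 : w.2.2.1 = v.2.2.1 → w.1 = v.1 := fun h => (hout.1 h).elim
    have hc2 : w.2.2.1 = v.2.2.2 → w.1 = v.2.1 := fun h => (hout.2 h).elim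
    rcases hin with hA | hB
    · -- shared value v.2.2.1 via w.2.2.2, mismatch gives w.2.1 ≠ v.1
      have hc4 : w.2.2.2 = v.2.2.2 → w.2.1 = v.2.1 :=
        fun h => (hvy (hA.symm.trans h)).elim
      have hxne : w.2.1 ≠ v.1 := fun hxx => hnmatch ⟨hc1, hc2, fun _ => hxx, hc4⟩
      refine le_trans (fsProb_mono hm (S' := fun ω =>
          (fOne ω a1 = fOne ω a0 ∧ fOne ω a2 = fOne ω a0) ∧
          (∀ y ∈ Y, fTwo ω y = sOne ω (g y)) ∧ ((1:ℕ) = 1 → sOne ω w.2.1 = sOne ω v.1)) ?_)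
        (le_trans (master hc hm hmc a0 a1 a2 h01 h02 h12 Y g 1 v.1 w.2.1
          (Or.inr ⟨rfl, Ne.symm hxne⟩)) ?_)
      · rintro ω ⟨hZv, hZw⟩
        refine ⟨himp ω hZv.1 hZw.1, hYimp ω hZv hZw, fun _ => ?_⟩
        have h' := hZw.2.2
        rw [hA] at h'
        exact h'.symm.trans hZv.2.1
      · rw [hYcard]
    · -- shared value v.2.2.2 via w.2.2.2, mismatch gives w.2.1 ≠ v.2.1
      have hc3 : w.2.2.2 = v.2.2.1 → w.2.1 = v.1 :=
        fun h => ((Ne.symm hvy) (hB.symm.trans h)).elim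
      have hxne : w.2.1 ≠ v.2.1 := fun hxx => hnmatch ⟨hc1, hc2, hc3, fun _ => hxx⟩
      refine le_trans (fsProb_mono hm (S' := fun ω =>
          (fOne ω a1 = fOne ω a0 ∧ fOne ω a2 = fOne ω a0) ∧
          (∀ y ∈ Y, fTwo ω y = sOne ω (g y)) ∧ ((1:ℕ) = 1 → sOne ω w.2.1 = sOne ω v.2.1)) ?_)
        (le_trans (master hc hm hmc a0 a1 a2 h01 h02 h12 Y g 1 v.2.1 w.2.1
          (Or.inr ⟨rfl, Ne.symm hxne⟩)) ?_)
      · rintro ω ⟨hZv, hZw⟩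
        refine ⟨himp ω hZv.1 hZw.1, hYimp ω hZv hZw, fun _ => ?_⟩
        have h' := hZw.2.2
        rw [hB] at h'
        exact h'.symm.trans hZv.2.2
      · rw [hYcard]

lemma part2_bound (hc : 1 < c) (hm : n1 + n2 < m)
    (hmc : (m : ℝ) / c ≤ (m : ℝ) - (n1 : ℝ))
    {v w : Fin n1 × Fin n1 × Fin n2 × Fin n2}
    (hv : v ∈ Ttup n1 n2) (hw : w ∈ Tcommon n1 n2 1 v)
    (hy2 : (({v.2.2.1, v.2.2.2} : Finset (Fin n2)) ∩ {w.2.2.1, w.2.2.2}).card = 2) :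
    fsExp n1 n2 m (fun ω => Zind v ω * Zind w ω) ≤ (1/(m:ℝ))^2 * (c/m)^3 := by
  rw [fsExp_ind]
  obtain ⟨hvx, hvy⟩ := (Finset.mem_filter.1 hv).2
  have hw' := Finset.mem_filter.1 hw
  obtain ⟨hwx, hwy⟩ := (Finset.mem_filter.1 hw'.1).2
  have hx1 := hw'.2.2
  obtain ⟨a0, a1, a2, h01, h02, h12, himp⟩ := xTriple hvx hwx hx1
  set Y : Finset (Fin n2) := {v.2.2.1, v.2.2.2} with hY
  have hYcard : Y.card = 2 := Finset.card_pair hvy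
  set g : Fin n2 → Fin n1 := fun y => if y = v.2.2.1 then v.1 else v.2.1 with hg
  have hYimp : ∀ (ω : FSSpace n1 n2 m), ZEvent v ω →
      ∀ y ∈ Y, fTwo ω y = sOne ω (g y) := by
    intro ω hZv y hy
    rw [hY] at hy
    rcases Finset.mem_insert.1 hy with rfl | hy
    · simpa [hg] using hZv.2.1
    · have hyy := Finset.mem_singleton.1 hy
      subst hyy
      simpa [hg, Ne.symm hvy] using hZv.2.2
  have hxout : w.1 ∈ ({v.1, v.2.1} : Finset (Fin n1)) →
      (w.2.1 ≠ v.1 ∧ w.2.1 ≠ v.2.1) := by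
    intro hmem
    rcases pair_inter_one hvx.ne hwx.ne hx1 with ⟨_, ho⟩ | ⟨_, ho⟩ <;>
      simp only [Finset.mem_insert, Finset.mem_singleton, not_or] at ho ⊢
    · exact ho
    · exact absurd (by simpa using hmem) (not_or.2 ho)
  rcases pair_inter_two hvy hwy hy2 with ⟨hA1, hA2⟩ | ⟨hB1, hB2⟩
  · -- (y1', y2') = (y1, y2)
    by_cases hww : w.1 = v.1
    · obtain ⟨_, ho2⟩ := hxout (by simp [hww])
      refine le_trans (fsProb_mono hm (S' := fun ω =>
          (fOne ω a1 = fOne ω a0 ∧ fOne ω a2 = fOne ω a0) ∧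
          (∀ y ∈ Y, fTwo ω y = sOne ω (g y)) ∧ ((1:ℕ) = 1 → sOne ω w.2.1 = sOne ω v.2.1)) ?_)
        (le_trans (master hc hm hmc a0 a1 a2 h01 h02 h12 Y g 1 v.2.1 w.2.1
          (Or.inr ⟨rfl, Ne.symm ho2⟩)) ?_)
      · rintro ω ⟨hZv, hZw⟩
        refine ⟨himp ω hZv.1 hZw.1, hYimp ω hZv, fun _ => ?_⟩
        have h' := hZw.2.2
        rw [hA2] at h'
        exact h'.symm.trans hZv.2.2
      · rw [hYcard]
    · refine le_trans (fsProb_mono hm (S' := fun ω =>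
          (fOne ω a1 = fOne ω a0 ∧ fOne ω a2 = fOne ω a0) ∧
          (∀ y ∈ Y, fTwo ω y = sOne ω (g y)) ∧ ((1:ℕ) = 1 → sOne ω w.1 = sOne ω v.1)) ?_)
        (le_trans (master hc hm hmc a0 a1 a2 h01 h02 h12 Y g 1 v.1 w.1
          (Or.inr ⟨rfl, Ne.symm hww⟩)) ?_)
      · rintro ω ⟨hZv, hZw⟩
        refine ⟨himp ω hZv.1 hZw.1, hYimp ω hZv, fun _ => ?_⟩
        have h' := hZw.2.1
        rw [hA1] at h'
        exact h'.symm.trans hZv.2.1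
      · rw [hYcard]
  · -- (y1', y2') = (y2, y1)
    by_cases hww : w.1 = v.2.1
    · obtain ⟨ho1, _⟩ := hxout (by simp [hww])
      refine le_trans (fsProb_mono hm (S' := fun ω =>
          (fOne ω a1 = fOne ω a0 ∧ fOne ω a2 = fOne ω a0) ∧
          (∀ y ∈ Y, fTwo ω y = sOne ω (g y)) ∧ ((1:ℕ) = 1 → sOne ω w.2.1 = sOne ω v.1)) ?_)
        (le_trans (master hc hm hmc a0 a1 a2 h01 h02 h12 Y g 1 v.1 w.2.1
          (Or.inr ⟨rfl, Ne.symm ho1⟩)) ?_)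
      · rintro ω ⟨hZv, hZw⟩
        refine ⟨himp ω hZv.1 hZw.1, hYimp ω hZv, fun _ => ?_⟩
        have h' := hZw.2.2
        rw [hB2] at h'
        exact h'.symm.trans hZv.2.1
      · rw [hYcard]
    · refine le_trans (fsProb_mono hm (S' := fun ω =>
          (fOne ω a1 = fOne ω a0 ∧ fOne ω a2 = fOne ω a0) ∧
          (∀ y ∈ Y, fTwo ω y = sOne ω (g y)) ∧ ((1:ℕ) = 1 → sOne ω w.1 = sOne ω v.2.1)) ?_)
        (le_trans (master hc hm hmc a0 a1 a2 h01 h02 h12 Y g 1 v.2.1 w.1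
          (Or.inr ⟨rfl, Ne.symm hww⟩)) ?_)
      · rintro ω ⟨hZv, hZw⟩
        refine ⟨himp ω hZv.1 hZw.1, hYimp ω hZv, fun _ => ?_⟩
        have h' := hZw.2.1
        rw [hB1] at h'
        exact h'.symm.trans hZv.2.2
      · rw [hYcard]

end Parts2
section Counts
variable {n1 n2 : ℕ}

lemma card_le_recon {α β : Type*} (s : Finset α) (t : Finset β)
    (F : α → β) (G : β → α) (hmaps : ∀ w ∈ s, F w ∈ t)
    (hrec : ∀ w ∈ s, G (F w) = w) : s.card ≤ t.card :=
  Finset.card_le_card_of_injOn F hmaps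
    (fun w hw w' hw' h => by
      rw [← hrec w (Finset.mem_coe.1 hw), ← hrec w' (Finset.mem_coe.1 hw'), h])

/-- y-intersection cardinality. -/
def ycard {n1 n2 : ℕ} (v w : Fin n1 × Fin n1 × Fin n2 × Fin n2) : ℕ :=
  ((({v.2.2.1, v.2.2.2} : Finset (Fin n2))) ∩ {w.2.2.1, w.2.2.2}).card

lemma tcommon_facts {v w : Fin n1 × Fin n1 × Fin n2 × Fin n2}
    (hv : v ∈ Ttup n1 n2) (hw : w ∈ Tcommon n1 n2 1 v) :
    w.1 < w.2.1 ∧ w.2.2.1 ≠ w.2.2.2 ∧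
      ((w.1 ∈ ({v.1, v.2.1} : Finset (Fin n1)) ∧
          w.2.1 ∉ ({v.1, v.2.1} : Finset (Fin n1))) ∨
        (w.2.1 ∈ ({v.1, v.2.1} : Finset (Fin n1)) ∧
          w.1 ∉ ({v.1, v.2.1} : Finset (Fin n1)))) := by
  obtain ⟨hvx, hvy⟩ := (Finset.mem_filter.1 hv).2
  have hw' := Finset.mem_filter.1 hw
  obtain ⟨hwx, hwy⟩ := (Finset.mem_filter.1 hw'.1).2
  exact ⟨hwx, hwy, pair_inter_one hvx.ne hwx.ne hw'.2.2⟩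

lemma xpair_recon {u1 u2 s a : Fin n1} (hwx : u1 < u2)
    (hs : s = u1 ∧ a = u2 ∨ s = u2 ∧ a = u1) :
    (if s < a then s else a) = u1 ∧ (if s < a then a else s) = u2 := by
  rcases hs with ⟨rfl, rfl⟩ | ⟨rfl, rfl⟩
  · rw [if_pos hwx, if_pos hwx]
    exact ⟨rfl, rfl⟩
  · rw [if_neg (asymm hwx), if_neg (asymm hwx)]
    exact ⟨rfl, rfl⟩

lemma count0_le {v : Fin n1 × Fin n1 × Fin n2 × Fin n2} (hv : v ∈ Ttup n1 n2)
    (s : Finset (Fin n1 × Fin n1 × Fin n2 × Fin n2))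
    (hs : ∀ w ∈ s, w ∈ Tcommon n1 n2 1 v) :
    s.card ≤ 2 * (n1 * (n2 * n2)) := by
  obtain ⟨hvx, hvy⟩ := (Finset.mem_filter.1 hv).2
  have hle := card_le_recon s
    (({v.1, v.2.1} : Finset (Fin n1)) ×ˢ (univ : Finset (Fin n1)) ×ˢ
      (univ : Finset (Fin n2)) ×ˢ (univ : Finset (Fin n2)))
    (fun w => (if w.1 ∈ ({v.1, v.2.1} : Finset (Fin n1)) then w.1 else w.2.1,
      if w.1 ∈ ({v.1, v.2.1} : Finset (Fin n1)) then w.2.1 else w.1, w.2.2.1, w.2.2.2))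
    (fun z => if z.1 < z.2.1 then (z.1, z.2.1, z.2.2.1, z.2.2.2)
      else (z.2.1, z.1, z.2.2.1, z.2.2.2)) ?_ ?_
  · refine hle.trans (le_of_eq ?_)
    rw [Finset.card_product, Finset.card_product, Finset.card_product,
      Finset.card_pair hvx.ne]
    simp
  · intro w hw
    obtain ⟨hwx, hwy, hcase⟩ := tcommon_facts hv (hs w hw)
    simp only [Finset.mem_product]
    refine ⟨?_, by simp, by simp, by simp⟩
    rcases hcase with ⟨h1, _⟩ | ⟨h1, h2⟩
    · rw [if_pos h1]; exact h1
    · rw [if_neg h2]; exact h1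
  · intro w hw
    obtain ⟨hwx, hwy, hcase⟩ := tcommon_facts hv (hs w hw)
    by_cases hmem : w.1 ∈ ({v.1, v.2.1} : Finset (Fin n1))
    · simp only [if_pos hmem]
      rw [if_pos hwx]
    · simp only [if_neg hmem]
      rw [if_neg (asymm hwx)]

lemma count1m_le {v : Fin n1 × Fin n1 × Fin n2 × Fin n2} (hv : v ∈ Ttup n1 n2)
    (s : Finset (Fin n1 × Fin n1 × Fin n2 × Fin n2))
    (hs : ∀ w ∈ s, w ∈ Tcommon n1 n2 1 v ∧ ycard v w = 1 ∧ matchP v w) :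
    s.card ≤ 2 * (2 * (n1 * n2)) := by
  obtain ⟨hvx, hvy⟩ := (Finset.mem_filter.1 hv).2
  have hle := card_le_recon s
    ((univ : Finset (Fin 2)) ×ˢ ({v.2.2.1, v.2.2.2} : Finset (Fin n2)) ×ˢ
      (univ : Finset (Fin n1)) ×ˢ (univ : Finset (Fin n2)))
    (fun w => ((if w.2.2.1 ∈ ({v.2.2.1, v.2.2.2} : Finset (Fin n2)) then (0:Fin 2) else 1),
      (if w.2.2.1 ∈ ({v.2.2.1, v.2.2.2} : Finset (Fin n2)) then w.2.2.1 else w.2.2.2),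
      (if w.2.2.1 ∈ ({v.2.2.1, v.2.2.2} : Finset (Fin n2)) then w.2.1 else w.1),
      (if w.2.2.1 ∈ ({v.2.2.1, v.2.2.2} : Finset (Fin n2)) then w.2.2.2 else w.2.2.1)))
    (fun z => if z.1 = 0
      then ((if z.2.1 = v.2.2.1 then v.1 else v.2.1), z.2.2.1, z.2.1, z.2.2.2)
      else (z.2.2.1, (if z.2.1 = v.2.2.1 then v.1 else v.2.1), z.2.2.2, z.2.1)) ?_ ?_
  · refine hle.trans (le_of_eq ?_)
    rw [Finset.card_product, Finset.card_product, Finset.card_product,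
      Finset.card_pair hvy]
    simp [mul_comm, mul_assoc, mul_left_comm]
  · intro w hw
    obtain ⟨hwT, hy1, hmat⟩ := hs w hw
    obtain ⟨hwx, hwy, _⟩ := tcommon_facts hv hwT
    simp only [Finset.mem_product]
    refine ⟨by simp, ?_, by simp, by simp⟩
    rcases pair_inter_one hvy hwy hy1 with ⟨h1, _⟩ | ⟨h1, h2⟩
    · rw [if_pos h1]; exact h1
    · rw [if_neg h2]; exact h1
  · intro w hw
    obtain ⟨hwT, hy1, hmat⟩ := hs w hw
    obtain ⟨hwx, hwy, _⟩ := tcommon_facts hv hwT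
    rcases pair_inter_one hvy hwy hy1 with ⟨hmem, hout⟩ | ⟨hmem, hout⟩
    · simp only [if_pos hmem, if_true]
      rcases Finset.mem_insert.1 hmem with h | h
      · rw [if_pos h, ← hmat.1 h]
      · have h' := Finset.mem_singleton.1 h
        have hne : ¬ w.2.2.1 = v.2.2.1 := by rw [h']; exact Ne.symm hvy
        rw [if_neg hne, ← hmat.2.1 h']
    · simp only [if_neg hout, if_false]
      rw [if_neg (show ¬ (1:Fin 2) = 0 by decide)]
      rcases Finset.mem_insert.1 hmem with h | h
      · rw [if_pos h, ← hmat.2.2.1 h]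
      · have h' := Finset.mem_singleton.1 h
        have hne : ¬ w.2.2.2 = v.2.2.1 := by rw [h']; exact Ne.symm hvy
        rw [if_neg hne, ← hmat.2.2.2 h']

lemma count1_le {v : Fin n1 × Fin n1 × Fin n2 × Fin n2} (hv : v ∈ Ttup n1 n2)
    (s : Finset (Fin n1 × Fin n1 × Fin n2 × Fin n2))
    (hs : ∀ w ∈ s, w ∈ Tcommon n1 n2 1 v ∧ ycard v w = 1) :
    s.card ≤ 2 * (2 * (2 * (n1 * (n2 - 2)))) := by
  obtain ⟨hvx, hvy⟩ := (Finset.mem_filter.1 hv).2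
  have hle := card_le_recon s
    ((univ : Finset (Fin 2)) ×ˢ ({v.2.2.1, v.2.2.2} : Finset (Fin n2)) ×ˢ
      ({v.1, v.2.1} : Finset (Fin n1)) ×ˢ (univ : Finset (Fin n1)) ×ˢ
      ((univ : Finset (Fin n2)) \ {v.2.2.1, v.2.2.2}))
    (fun w => ((if w.2.2.1 ∈ ({v.2.2.1, v.2.2.2} : Finset (Fin n2)) then (0:Fin 2) else 1),
      (if w.2.2.1 ∈ ({v.2.2.1, v.2.2.2} : Finset (Fin n2)) then w.2.2.1 else w.2.2.2),
      (if w.1 ∈ ({v.1, v.2.1} : Finset (Fin n1)) then w.1 else w.2.1),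
      (if w.1 ∈ ({v.1, v.2.1} : Finset (Fin n1)) then w.2.1 else w.1),
      (if w.2.2.1 ∈ ({v.2.2.1, v.2.2.2} : Finset (Fin n2)) then w.2.2.2 else w.2.2.1)))
    (fun z => if z.1 = 0
      then ((if z.2.2.1 < z.2.2.2.1 then z.2.2.1 else z.2.2.2.1),
            (if z.2.2.1 < z.2.2.2.1 then z.2.2.2.1 else z.2.2.1), z.2.1, z.2.2.2.2)
      else ((if z.2.2.1 < z.2.2.2.1 then z.2.2.1 else z.2.2.2.1),
            (if z.2.2.1 < z.2.2.2.1 then z.2.2.2.1 else z.2.2.1), z.2.2.2.2, z.2.1)) ?_ ?_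
  · refine hle.trans (le_of_eq ?_)
    rw [Finset.card_product, Finset.card_product, Finset.card_product,
      Finset.card_product, Finset.card_pair hvy, Finset.card_pair hvx.ne,
      Finset.card_sdiff_of_subset (Finset.subset_univ _), Finset.card_pair hvy]
    simp
  · intro w hw
    obtain ⟨hwT, hy1⟩ := hs w hw
    obtain ⟨hwx, hwy, hxcase⟩ := tcommon_facts hv hwT
    simp only [Finset.mem_product]
    refine ⟨by simp, ?_, ?_, by simp, ?_⟩
    · rcases pair_inter_one hvy hwy hy1 with ⟨h1, _⟩ | ⟨h1, h2⟩
      · rw [if_pos h1]; exact h1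
      · rw [if_neg h2]; exact h1
    · rcases hxcase with ⟨h1, _⟩ | ⟨h1, h2⟩
      · rw [if_pos h1]; exact h1
      · rw [if_neg h2]; exact h1
    · rcases pair_inter_one hvy hwy hy1 with ⟨h1, h2⟩ | ⟨h1, h2⟩
      · rw [if_pos h1]; exact Finset.mem_sdiff.2 ⟨by simp, h2⟩
      · rw [if_neg h2]; exact Finset.mem_sdiff.2 ⟨by simp, h2⟩
  · intro w hw
    obtain ⟨hwT, hy1⟩ := hs w hw
    obtain ⟨hwx, hwy, hxcase⟩ := tcommon_facts hv hwT
    have hxeq : ((if (if w.1 ∈ ({v.1, v.2.1} : Finset (Fin n1)) then w.1 else w.2.1)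
          < (if w.1 ∈ ({v.1, v.2.1} : Finset (Fin n1)) then w.2.1 else w.1)
        then (if w.1 ∈ ({v.1, v.2.1} : Finset (Fin n1)) then w.1 else w.2.1)
        else (if w.1 ∈ ({v.1, v.2.1} : Finset (Fin n1)) then w.2.1 else w.1)) = w.1)
        ∧ ((if (if w.1 ∈ ({v.1, v.2.1} : Finset (Fin n1)) then w.1 else w.2.1)
          < (if w.1 ∈ ({v.1, v.2.1} : Finset (Fin n1)) then w.2.1 else w.1)
        then (if w.1 ∈ ({v.1, v.2.1} : Finset (Fin n1)) then w.2.1 else w.1)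
        else (if w.1 ∈ ({v.1, v.2.1} : Finset (Fin n1)) then w.1 else w.2.1)) = w.2.1) := by
      by_cases hmem : w.1 ∈ ({v.1, v.2.1} : Finset (Fin n1))
      · simp only [if_pos hmem]
        exact xpair_recon hwx (Or.inl ⟨rfl, rfl⟩)
      · simp only [if_neg hmem]
        exact xpair_recon hwx (Or.inr ⟨rfl, rfl⟩)
    rcases pair_inter_one hvy hwy hy1 with ⟨hmem, hout⟩ | ⟨hmem, hout⟩
    · simp only [if_pos hmem, if_true]
      rw [hxeq.1, hxeq.2]
    · simp only [if_neg hout, if_false]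
      rw [if_neg (show ¬ (1:Fin 2) = 0 by decide), hxeq.1, hxeq.2]

lemma count2_le {v : Fin n1 × Fin n1 × Fin n2 × Fin n2} (hv : v ∈ Ttup n1 n2)
    (s : Finset (Fin n1 × Fin n1 × Fin n2 × Fin n2))
    (hs : ∀ w ∈ s, w ∈ Tcommon n1 n2 1 v ∧ ycard v w = 2) :
    s.card ≤ 2 * (2 * n1) := by
  obtain ⟨hvx, hvy⟩ := (Finset.mem_filter.1 hv).2
  have hle := card_le_recon s
    ((univ : Finset (Fin 2)) ×ˢ ({v.1, v.2.1} : Finset (Fin n1)) ×ˢ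
      (univ : Finset (Fin n1)))
    (fun w => ((if w.2.2.1 = v.2.2.1 then (0:Fin 2) else 1),
      (if w.1 ∈ ({v.1, v.2.1} : Finset (Fin n1)) then w.1 else w.2.1),
      (if w.1 ∈ ({v.1, v.2.1} : Finset (Fin n1)) then w.2.1 else w.1)))
    (fun z => if z.1 = 0
      then ((if z.2.1 < z.2.2 then z.2.1 else z.2.2),
            (if z.2.1 < z.2.2 then z.2.2 else z.2.1), v.2.2.1, v.2.2.2)
      else ((if z.2.1 < z.2.2 then z.2.1 else z.2.2),
            (if z.2.1 < z.2.2 then z.2.2 else z.2.1), v.2.2.2, v.2.2.1)) ?_ ?_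
  · refine hle.trans (le_of_eq ?_)
    rw [Finset.card_product, Finset.card_product, Finset.card_pair hvx.ne]
    simp
  · intro w hw
    obtain ⟨hwT, hy2⟩ := hs w hw
    obtain ⟨hwx, hwy, hxcase⟩ := tcommon_facts hv hwT
    simp only [Finset.mem_product]
    refine ⟨by simp, ?_, by simp⟩
    rcases hxcase with ⟨h1, _⟩ | ⟨h1, h2⟩
    · rw [if_pos h1]; exact h1
    · rw [if_neg h2]; exact h1
  · intro w hw
    obtain ⟨hwT, hy2⟩ := hs w hw
    obtain ⟨hwx, hwy, hxcase⟩ := tcommon_facts hv hwT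
    have hxeq : ((if (if w.1 ∈ ({v.1, v.2.1} : Finset (Fin n1)) then w.1 else w.2.1)
          < (if w.1 ∈ ({v.1, v.2.1} : Finset (Fin n1)) then w.2.1 else w.1)
        then (if w.1 ∈ ({v.1, v.2.1} : Finset (Fin n1)) then w.1 else w.2.1)
        else (if w.1 ∈ ({v.1, v.2.1} : Finset (Fin n1)) then w.2.1 else w.1)) = w.1)
        ∧ ((if (if w.1 ∈ ({v.1, v.2.1} : Finset (Fin n1)) then w.1 else w.2.1)
          < (if w.1 ∈ ({v.1, v.2.1} : Finset (Fin n1)) then w.2.1 else w.1)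
        then (if w.1 ∈ ({v.1, v.2.1} : Finset (Fin n1)) then w.2.1 else w.1)
        else (if w.1 ∈ ({v.1, v.2.1} : Finset (Fin n1)) then w.1 else w.2.1)) = w.2.1) := by
      by_cases hmem : w.1 ∈ ({v.1, v.2.1} : Finset (Fin n1))
      · simp only [if_pos hmem]
        exact xpair_recon hwx (Or.inl ⟨rfl, rfl⟩)
      · simp only [if_neg hmem]
        exact xpair_recon hwx (Or.inr ⟨rfl, rfl⟩)
    rcases pair_inter_two hvy hwy hy2 with ⟨hA1, hA2⟩ | ⟨hB1, hB2⟩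
    · simp only [if_pos hA1, if_true]
      rw [hxeq.1, hxeq.2, ← hA1, ← hA2]
    · have hne : ¬ w.2.2.1 = v.2.2.1 := by rw [hB1]; exact Ne.symm hvy
      simp only [if_neg hne, if_false]
      rw [if_neg (show ¬ (1:Fin 2) = 0 by decide), hxeq.1, hxeq.2, ← hB1, ← hB2]

end Counts

/-- **Inequality (7).** In the random fs-relation graph model with
`n1 = δn`, `n2 = (1-δ)n` and `m - n ≥ m/c`, the sum over `v ∈ T` and `w ∈ T_1(v)` of
`E[Z_v Z_w]` is at most `(4c⁴δ(1-δ)²n³/m⁶ + 4c³δ(1-δ)n²/m⁵ + 4c³δn/m⁵)·|T|`. -/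
theorem one_common_sum_bound (δ : ℝ) (hδ0 : 0 < δ) (hδ1 : δ < 1)
    (c : ℝ) (hc : 1 < c) (n n1 n2 m : ℕ)
    (hn1 : (n1 : ℝ) = δ * n) (hn2 : (n2 : ℝ) = (1 - δ) * n)
    (hm : n < m) (hmc : (m : ℝ) / c ≤ (m : ℝ) - (n : ℝ)) :
    ∑ v ∈ Ttup n1 n2, ∑ w ∈ Tcommon n1 n2 1 v,
        fsExp n1 n2 m (fun ω => Zind v ω * Zind w ω) ≤
      (4 * c ^ 4 * δ * (1 - δ) ^ 2 * (n : ℝ) ^ 3 / (m : ℝ) ^ 6 +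
        4 * c ^ 3 * δ * (1 - δ) * (n : ℝ) ^ 2 / (m : ℝ) ^ 5 +
        4 * c ^ 3 * δ * (n : ℝ) / (m : ℝ) ^ 5) * ((Ttup n1 n2).card : ℝ) := by
  have hm0 : 0 < m := lt_of_le_of_lt (Nat.zero_le n) hm
  have hmr : (0:ℝ) < m := by exact_mod_cast hm0
  have hmne : (m:ℝ) ≠ 0 := hmr.ne'
  have hn12 : n1 + n2 = n := by
    have h : ((n1 : ℝ) + (n2 : ℝ)) = (n : ℝ) := by rw [hn1, hn2]; ring
    exact_mod_cast h
  have hmn : n1 + n2 < m := by omega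
  have hmc' : (m:ℝ)/c ≤ (m:ℝ) - (n1:ℝ) := by
    refine hmc.trans ?_
    have h1 : (n1:ℝ) ≤ (n:ℝ) := by
      rw [hn1]
      nlinarith [Nat.cast_nonneg (α := ℝ) n]
    linarith
  set B4 : ℝ := (1/(m:ℝ))^2 * (c/(m:ℝ))^4 with hB4
  set B3 : ℝ := (1/(m:ℝ))^2 * (c/(m:ℝ))^3 with hB3
  have hc0 : (0:ℝ) < c := lt_trans one_pos hc
  have hB4nn : 0 ≤ B4 := by rw [hB4]; positivity
  have hB3nn : 0 ≤ B3 := by rw [hB3]; positivity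
  set E : ℝ := 4 * c ^ 4 * δ * (1 - δ) ^ 2 * (n : ℝ) ^ 3 / (m : ℝ) ^ 6 +
      4 * c ^ 3 * δ * (1 - δ) * (n : ℝ) ^ 2 / (m : ℝ) ^ 5 +
      4 * c ^ 3 * δ * (n : ℝ) / (m : ℝ) ^ 5 with hE
  have hcnt : 2*(2*(2*(n1*(n2-2)))) ≤ 2*(n1*(n2*n2)) := by
    rcases Nat.le_total n2 2 with h | h
    · have h0 : n2 - 2 = 0 := by omega
      simp [h0]
    · obtain ⟨k, rfl⟩ := Nat.exists_eq_add_of_le h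
      have h0 : 2 + k - 2 = k := by omega
      rw [h0]
      nlinarith [Nat.zero_le (n1 * (k*k))]
  have key : ∀ v ∈ Ttup n1 n2,
      (∑ w ∈ Tcommon n1 n2 1 v, fsExp n1 n2 m (fun ω => Zind v ω * Zind w ω)) ≤ E := by
    intro v hv
    rw [← Finset.sum_filter_add_sum_filter_not (Tcommon n1 n2 1 v)
      (fun w => ycard v w = 0)]
    rw [← Finset.sum_filter_add_sum_filter_not
      ((Tcommon n1 n2 1 v).filter (fun w => ¬ ycard v w = 0)) (fun w => ycard v w = 1)]
    rw [← Finset.sum_filter_add_sum_filter_not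
      (((Tcommon n1 n2 1 v).filter (fun w => ¬ ycard v w = 0)).filter
        (fun w => ycard v w = 1)) (fun w => matchP v w)]
    have hvy : v.2.2.1 ≠ v.2.2.2 := ((Finset.mem_filter.1 hv).2).2
    -- part 0
    have h0 : (∑ w ∈ (Tcommon n1 n2 1 v).filter (fun w => ycard v w = 0),
        fsExp n1 n2 m (fun ω => Zind v ω * Zind w ω)) ≤ (2*(n1*(n2*n2)) : ℕ) * B4 := by
      refine le_trans (Finset.sum_le_card_nsmul _ _ B4 ?_) ?_
      · intro w hw
        obtain ⟨hwS, hw0⟩ := Finset.mem_filter.1 hw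
        exact part0_bound hc hmn hmc' hv hwS hw0
      · rw [nsmul_eq_mul]
        refine mul_le_mul_of_nonneg_right ?_ hB4nn
        exact_mod_cast count0_le hv _ (fun w hw => (Finset.mem_filter.1 hw).1)
    -- part 1 match
    have h1m : (∑ w ∈ (((Tcommon n1 n2 1 v).filter (fun w => ¬ ycard v w = 0)).filter
          (fun w => ycard v w = 1)).filter (fun w => matchP v w),
        fsExp n1 n2 m (fun ω => Zind v ω * Zind w ω)) ≤ (2*(2*(n1*n2)) : ℕ) * B3 := by
      refine le_trans (Finset.sum_le_card_nsmul _ _ B3 ?_) ?_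
      · intro w hw
        have h1 := Finset.mem_filter.1 hw
        have h2 := Finset.mem_filter.1 h1.1
        have h3 := Finset.mem_filter.1 h2.1
        exact part1m_bound hc hmn hmc' hv h3.1 h2.2
      · rw [nsmul_eq_mul]
        refine mul_le_mul_of_nonneg_right ?_ hB3nn
        refine Nat.cast_le.2 (count1m_le hv _ ?_)
        intro w hw
        have h1 := Finset.mem_filter.1 hw
        have h2 := Finset.mem_filter.1 h1.1
        have h3 := Finset.mem_filter.1 h2.1
        exact ⟨h3.1, h2.2, h1.2⟩
    -- part 1 mismatch
    have h1mm : (∑ w ∈ (((Tcommon n1 n2 1 v).filter (fun w => ¬ ycard v w = 0)).filter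
          (fun w => ycard v w = 1)).filter (fun w => ¬ matchP v w),
        fsExp n1 n2 m (fun ω => Zind v ω * Zind w ω))
          ≤ (2*(2*(2*(n1*(n2-2)))) : ℕ) * B4 := by
      refine le_trans (Finset.sum_le_card_nsmul _ _ B4 ?_) ?_
      · intro w hw
        have h1 := Finset.mem_filter.1 hw
        have h2 := Finset.mem_filter.1 h1.1
        have h3 := Finset.mem_filter.1 h2.1
        exact part1mm_bound hc hmn hmc' hv h3.1 h2.2 h1.2
      · rw [nsmul_eq_mul]
        refine mul_le_mul_of_nonneg_right ?_ hB4nn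
        refine Nat.cast_le.2 (count1_le hv _ ?_)
        intro w hw
        have h1 := Finset.mem_filter.1 hw
        have h2 := Finset.mem_filter.1 h1.1
        have h3 := Finset.mem_filter.1 h2.1
        exact ⟨h3.1, h2.2⟩
    -- part 2
    have h2 : (∑ w ∈ ((Tcommon n1 n2 1 v).filter (fun w => ¬ ycard v w = 0)).filter
          (fun w => ¬ ycard v w = 1),
        fsExp n1 n2 m (fun ω => Zind v ω * Zind w ω)) ≤ (2*(2*n1) : ℕ) * B3 := by
      have hy2 : ∀ w ∈ ((Tcommon n1 n2 1 v).filter (fun w => ¬ ycard v w = 0)).filter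
          (fun w => ¬ ycard v w = 1), w ∈ Tcommon n1 n2 1 v ∧ ycard v w = 2 := by
        intro w hw
        have h1 := Finset.mem_filter.1 hw
        have h2' := Finset.mem_filter.1 h1.1
        have hle2 : ycard v w ≤ 2 := pair_inter_card_le hvy
        exact ⟨h2'.1, by omega⟩
      refine le_trans (Finset.sum_le_card_nsmul _ _ B3 ?_) ?_
      · intro w hw
        obtain ⟨hwS, hw2⟩ := hy2 w hw
        exact part2_bound hc hmn hmc' hv hwS hw2
      · rw [nsmul_eq_mul]
        refine mul_le_mul_of_nonneg_right ?_ hB3nn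
        exact Nat.cast_le.2 (count2_le hv _ hy2)
    refine le_trans (add_le_add h0 (add_le_add (add_le_add h1m h1mm) h2)) ?_
    have hC : ((2*(2*(2*(n1*(n2-2)))) : ℕ) : ℝ) ≤ ((2*(n1*(n2*n2)) : ℕ) : ℝ) :=
      Nat.cast_le.2 hcnt
    have hstep : ((2*(n1*(n2*n2)) : ℕ) : ℝ) * B4 + (((2*(2*(n1*n2)) : ℕ) : ℝ) * B3 +
        ((2*(2*(2*(n1*(n2-2)))) : ℕ) : ℝ) * B4 + ((2*(2*n1) : ℕ) : ℝ) * B3)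
        ≤ ((2*(n1*(n2*n2)) : ℕ) : ℝ) * B4 + (((2*(2*(n1*n2)) : ℕ) : ℝ) * B3 +
        ((2*(n1*(n2*n2)) : ℕ) : ℝ) * B4 + ((2*(2*n1) : ℕ) : ℝ) * B3) := by
      have := mul_le_mul_of_nonneg_right hC hB4nn
      linarith
    refine hstep.trans (le_of_eq ?_)
    rw [hE, hB4, hB3]
    push_cast
    rw [hn1, hn2]
    field_simp
    ring
  calc ∑ v ∈ Ttup n1 n2, ∑ w ∈ Tcommon n1 n2 1 v,
        fsExp n1 n2 m (fun ω => Zind v ω * Zind w ω)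
      ≤ ∑ _v ∈ Ttup n1 n2, E := Finset.sum_le_sum key
    _ = ((Ttup n1 n2).card : ℕ) • E := Finset.sum_const E
    _ = E * ((Ttup n1 n2).card : ℝ) := by rw [nsmul_eq_mul, mul_comm]
    _ = (4 * c ^ 4 * δ * (1 - δ) ^ 2 * (n : ℝ) ^ 3 / (m : ℝ) ^ 6 +
        4 * c ^ 3 * δ * (1 - δ) * (n : ℝ) ^ 2 / (m : ℝ) ^ 5 +
        4 * c ^ 3 * δ * (n : ℝ) / (m : ℝ) ^ 5) * ((Ttup n1 n2).card : ℝ) := by rw [hE]
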